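/- Suppose Condition ℬ holds with parameters l and ν. Fix any n-dimensional cube I = Π_{i=1}^n [t_i/l, (t_i+1)/l] with t_i integers and B¹ₓ ≤ t_i/l < B²ₓ, and let LP_I(n,c) denote the optimal value of LP(n,c) when the variables x are restricted to lie in I. Then P(LP_I(n,c) ≤ (1/2)·ν·m/|𝒞|) ≤ e^{−m/(8|𝒞|)}, where m = ⌊cn⌋. -/

import Mathlib

open MeasureTheory ProbabilityTheory Filter

noncomputable section

/-- The sample space for a random instance of the K-LSAT problem with `n` variables and
`m` constraints, over a family of `N` prototype constraints in `K` variables: for each of the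
`m` constraints we record the ordered `K`-tuple of chosen variable indices and the index of the
chosen prototype constraint. -/
abbrev LPInst (K N n m : ℕ) : Type := Fin m → (Fin K → Fin n) × Fin N

/-- The law of a random instance: for each of the `m` constraints, independently, the `K`-tuple
of variable indices and the constraint type are chosen uniformly at random. -/
def lpMeasure (K N n m : ℕ) : Measure (LPInst K N n m) :=
  uniformOn (Set.univ : Set (LPInst K N n m))

/-- The optimal value `LP(n,c)` of the random linear program:
minimize `Σ_j ψ_j` subject to `Σ_k a_{r_j,k} x_{i_k(j)} ≤ b_{r_j} + ψ_j` for each constraint `j`,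
`x_i ∈ [B¹ₓ, B²ₓ]` and `ψ_j ≥ 0`. -/
def LPval {K N n m : ℕ} (A : Fin N → Fin K → ℝ) (bv : Fin N → ℝ)
    (B1 B2 : ℝ) (ω : LPInst K N n m) : ℝ :=
  sInf { v : ℝ | ∃ (x : Fin n → ℝ) (ψ : Fin m → ℝ),
    (∀ i, x i ∈ Set.Icc B1 B2) ∧ (∀ j, 0 ≤ ψ j) ∧
    (∀ j, ∑ k, A ((ω j).2) k * x ((ω j).1 k) ≤ bv ((ω j).2) + ψ j) ∧
    v = ∑ j, ψ j }

/-- Condition 𝒜: for every prototype constraint `a_r·y ≤ b_r`, every coordinate `k`, and every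
`z ∈ [B¹ₓ, B²ₓ]`, there are `y₁,…,y_K ∈ [B¹ₓ, B²ₓ]` with `y_k = z` satisfying the constraint. -/
def ConditionA {K N : ℕ} (A : Fin N → Fin K → ℝ) (bv : Fin N → ℝ) (B1 B2 : ℝ) : Prop :=
  ∀ r : Fin N, ∀ k : Fin K, ∀ z ∈ Set.Icc B1 B2,
    ∃ y : Fin K → ℝ, (∀ k', y k' ∈ Set.Icc B1 B2) ∧ y k = z ∧
      ∑ k', A r k' * y k' ≤ bv r

/-- Condition ℬ with explicit parameters `l` and `ν`: for every `K`-dimensional cube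
`I = Π_k [t_k/l, (t_k+1)/l]` with `t_k` integer and `B¹ₓ ≤ t_k/l < B²ₓ`, some prototype
constraint `a_r·y ≤ b_r` satisfies `Σ_k a_{r,k} y_k − b_r ≥ ν` for every `y ∈ I`. -/
def ConditionBWith {K N : ℕ} (A : Fin N → Fin K → ℝ) (bv : Fin N → ℝ) (B1 B2 : ℝ)
    (l : ℕ) (ν : ℝ) : Prop :=
  0 < l ∧ 0 < ν ∧
    ∀ t : Fin K → ℤ, (∀ k, B1 ≤ (t k : ℝ) / l ∧ (t k : ℝ) / l < B2) →
      ∃ r : Fin N, ∀ y : Fin K → ℝ,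
        (∀ k, y k ∈ Set.Icc ((t k : ℝ) / l) (((t k : ℝ) + 1) / l)) →
        ν ≤ ∑ k, A r k * y k - bv r

/-- Condition ℬ: there exist a positive integer `l` and `ν > 0` as in `ConditionBWith`. -/
def ConditionB {K N : ℕ} (A : Fin N → Fin K → ℝ) (bv : Fin N → ℝ) (B1 B2 : ℝ) : Prop :=
  ∃ (l : ℕ) (ν : ℝ), ConditionBWith A bv B1 B2 l ν

/-- The optimal value of the random linear program when each variable `x_i` is restricted to the
interval `[lo i, hi i]` (minimize `Σ_j ψ_j` subject to the random constraints with slacks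
`ψ_j ≥ 0`). -/
def LPvalBox {K N n m : ℕ} (A : Fin N → Fin K → ℝ) (bv : Fin N → ℝ)
    (lo hi : Fin n → ℝ) (ω : LPInst K N n m) : ℝ :=
  sInf { v : ℝ | ∃ (x : Fin n → ℝ) (ψ : Fin m → ℝ),
    (∀ i, x i ∈ Set.Icc (lo i) (hi i)) ∧ (∀ j, 0 ≤ ψ j) ∧
    (∀ j, ∑ k, A ((ω j).2) k * x ((ω j).1 k) ≤ bv ((ω j).2) + ψ j) ∧
    v = ∑ j, ψ j }


/-- Deterministic lower bound: the LP value over the box is at least `ν` times the number of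
constraints whose prototype index is the "violating" one for its tuple of variables. -/
private lemma lp_lower_aux {K N n m : ℕ} (A : Fin N → Fin K → ℝ) (bv : Fin N → ℝ)
    (lo hi : Fin n → ℝ) (hlohi : ∀ i, lo i ≤ hi i)
    (ν : ℝ) (rstar : (Fin K → Fin n) → Fin N)
    (hrs : ∀ (v : Fin K → Fin n) (y : Fin K → ℝ),
      (∀ k, y k ∈ Set.Icc (lo (v k)) (hi (v k))) →
        ν ≤ ∑ k, A (rstar v) k * y k - bv (rstar v))
    (ω : LPInst K N n m) [DecidablePred fun j : Fin m => (ω j).2 = rstar ((ω j).1)] :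
    ν * ((Finset.univ.filter fun j : Fin m => (ω j).2 = rstar ((ω j).1)).card : ℝ)
      ≤ LPvalBox A bv lo hi ω := by
  apply le_csInf
  · refine ⟨∑ j, max 0 (∑ k, A ((ω j).2) k * lo ((ω j).1 k) - bv ((ω j).2)), lo,
      fun j => max 0 (∑ k, A ((ω j).2) k * lo ((ω j).1 k) - bv ((ω j).2)),
      fun i => ⟨le_rfl, hlohi i⟩, fun j => le_max_left _ _, fun j => ?_, rfl⟩
    have h := le_max_right 0 (∑ k, A ((ω j).2) k * lo ((ω j).1 k) - bv ((ω j).2))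
    linarith
  · rintro b ⟨x, ψ, hx, hψ, hconstr, rfl⟩
    have hkey : ∀ j ∈ (Finset.univ.filter fun j : Fin m => (ω j).2 = rstar ((ω j).1)),
        ν ≤ ψ j := by
      intro j hj
      have hj' : (ω j).2 = rstar ((ω j).1) := (Finset.mem_filter.mp hj).2
      have h1 : ν ≤ ∑ k, A (rstar ((ω j).1)) k * x ((ω j).1 k) - bv (rstar ((ω j).1)) :=
        hrs ((ω j).1) (fun k => x ((ω j).1 k)) (fun k => hx _)
      have h2 := hconstr j
      rw [hj'] at h2
      linarith
    calc ν * ((Finset.univ.filter fun j : Fin m => (ω j).2 = rstar ((ω j).1)).card : ℝ)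
        = ∑ _j ∈ (Finset.univ.filter fun j : Fin m => (ω j).2 = rstar ((ω j).1)), ν := by
          rw [Finset.sum_const, nsmul_eq_mul, mul_comm]
      _ ≤ ∑ j ∈ (Finset.univ.filter fun j : Fin m => (ω j).2 = rstar ((ω j).1)), ψ j :=
          Finset.sum_le_sum hkey
      _ ≤ ∑ j, ψ j :=
          Finset.sum_le_sum_of_subset_of_nonneg (Finset.subset_univ _) fun j _ _ => hψ j

/-- **Chernoff bound for the cube-restricted LP under Condition ℬ.**
If Condition ℬ holds with parameters `l` and `ν`, then for any cube
`I = Π_i [t_i/l, (t_i+1)/l]` with integer `t_i` and `B¹ₓ ≤ t_i/l < B²ₓ`,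
`P(LP_I(n,c) ≤ (1/2)·ν·m/|𝒞|) ≤ exp(−m/(8|𝒞|))`, where `m = ⌊cn⌋`. -/
theorem lp_cube_chernoff
    (K N : ℕ) (hK : 2 ≤ K) (hN : 1 ≤ N)
    (A : Fin N → Fin K → ℝ) (bv : Fin N → ℝ)
    (B1 B2 : ℝ) (hB : B1 ≤ B2)
    (l : ℕ) (ν : ℝ) (hcond : ConditionBWith A bv B1 B2 l ν)
    (c : ℝ) (hc : 0 < c) (n : ℕ)
    (t : Fin n → ℤ) (ht : ∀ i, B1 ≤ (t i : ℝ) / l ∧ (t i : ℝ) / l < B2) :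
    ((lpMeasure K N n ⌊c * n⌋₊)
        {ω | LPvalBox A bv (fun i => (t i : ℝ) / l) (fun i => ((t i : ℝ) + 1) / l) ω ≤
          (1 / 2) * ν * (⌊c * n⌋₊ : ℝ) / N}).toReal ≤
      Real.exp (-(⌊c * n⌋₊ : ℝ) / (8 * N)) := by
  classical
  obtain ⟨hl, hν, hB3⟩ := hcond
  set m := ⌊c * n⌋₊ with hmdef
  set lo : Fin n → ℝ := fun i => (t i : ℝ) / l with hlo
  set hi : Fin n → ℝ := fun i => ((t i : ℝ) + 1) / l with hhi
  have hl0 : (0:ℝ) < l := by exact_mod_cast hl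
  have hN0 : (0:ℝ) < N := by exact_mod_cast hN
  have hlohi : ∀ i, lo i ≤ hi i := by
    intro i; simp only [hlo, hhi]; gcongr; · linarith
  choose rstar hrstar using fun v : Fin K → Fin n =>
    hB3 (fun k => t (v k)) (fun k => ht (v k))
  set cnt : LPInst K N n m → ℕ :=
    fun ω => (Finset.univ.filter fun j : Fin m => (ω j).2 = rstar ((ω j).1)).card with hcnt
  have hLB : ∀ ω : LPInst K N n m, ν * (cnt ω : ℝ) ≤ LPvalBox A bv lo hi ω := by
    intro ω
    exact lp_lower_aux A bv lo hi hlohi ν rstar (fun v y hy => hrstar v y hy) ω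
  rcases Nat.eq_zero_or_pos m with hm0 | hm1
  · -- degenerate case: m = 0, probability ≤ 1 = RHS
    have h1 : (lpMeasure K N n m
        {ω | LPvalBox A bv lo hi ω ≤ 1 / 2 * ν * (m:ℝ) / N}).toReal ≤ 1 := by
      have : lpMeasure K N n m = uniformOn (Set.univ : Set (LPInst K N n m)) := rfl
      rw [this]
      exact ENNReal.toReal_le_of_le_ofReal zero_le_one (by simpa using prob_le_one)
    have h2 : Real.exp (-(m:ℝ) / (8 * N)) = 1 := by
      rw [hm0]; norm_num
    rw [h2]; exact h1
  -- now m ≥ 1, hence n ≥ 1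
  have hn1 : 0 < n := by
    by_contra hn
    push_neg at hn
    interval_cases n
    simp [hmdef] at hm1
  -- the event is contained in the event that the count is small
  have hsub : {ω : LPInst K N n m | LPvalBox A bv lo hi ω ≤ 1 / 2 * ν * (m:ℝ) / N} ⊆
      {ω : LPInst K N n m | (cnt ω : ℝ) ≤ (m:ℝ) / (2 * N)} := by
    intro ω hω
    have h1 := hLB ω
    have h2 : ν * (cnt ω : ℝ) ≤ ν * ((m:ℝ) / (2 * N)) := by
      have : (1:ℝ) / 2 * ν * (m:ℝ) / N = ν * ((m:ℝ) / (2 * N)) := by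
        field_simp
      rw [← this]
      exact le_trans h1 hω
    exact (mul_le_mul_iff_right₀ hν).mp h2
  set S : Finset (LPInst K N n m) :=
    Finset.univ.filter (fun ω : LPInst K N n m => (cnt ω : ℝ) ≤ (m:ℝ) / (2 * N)) with hS
  have hEval : (lpMeasure K N n m {ω : LPInst K N n m | (cnt ω : ℝ) ≤ (m:ℝ) / (2 * N)})
      = (S.card : ENNReal) / (Fintype.card (LPInst K N n m) : ENNReal) := by
    rw [lpMeasure, uniformOn_univ, Measure.count_apply_finite _ (Set.toFinite _)]
    congr 2
    rw [hS]
    rw [Set.Finite.toFinset_setOf]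
  have hnonempty : Nonempty (LPInst K N n m) :=
    ⟨fun _ => (fun _ => ⟨0, hn1⟩, ⟨0, hN⟩)⟩
  have hcardpos : 0 < Fintype.card (LPInst K N n m) := Fintype.card_pos
  have hfin : lpMeasure K N n m {ω : LPInst K N n m | (cnt ω : ℝ) ≤ (m:ℝ) / (2 * N)} ≠ ⊤ := by
    rw [hEval]
    exact (ENNReal.div_lt_top (ENNReal.natCast_ne_top _)
      (by exact_mod_cast hcardpos.ne')).ne
  have hmono : (lpMeasure K N n m
      {ω | LPvalBox A bv lo hi ω ≤ 1 / 2 * ν * (m:ℝ) / N}).toReal ≤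
      (S.card : ℝ) / (Fintype.card (LPInst K N n m) : ℝ) := by
    have := ENNReal.toReal_mono hfin (measure_mono hsub)
    rw [hEval, ENNReal.toReal_div] at this
    simpa using this
  refine le_trans hmono ?_
  -- weighting function
  set f : (Fin K → Fin n) × Fin N → ℝ :=
    fun p => if p.2 = rstar p.1 then (1/2 : ℝ) else 1 with hf
  have hfnonneg : ∀ p, 0 ≤ f p := by
    intro p; rw [hf]; dsimp only; split <;> norm_num
  set θ : ℝ := (m:ℝ) / (2 * N) with hθ
  have hθ0 : 0 ≤ θ := by positivity
  set ε : ℝ := (1/2 : ℝ) ^ θ with hε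
  have hεpos : 0 < ε := Real.rpow_pos_of_pos (by norm_num) _
  -- for ω in S, the product of weights is at least ε
  have hw : ∀ ω ∈ S, ε ≤ ∏ j, f (ω j) := by
    intro ω hω
    have h1 : ∏ j, f (ω j) = (1/2 : ℝ) ^ (cnt ω) := by
      rw [hf]
      dsimp only
      rw [Finset.prod_ite]
      simp [hcnt]
    rw [h1, ← Real.rpow_natCast]
    exact Real.rpow_le_rpow_of_exponent_ge (by norm_num) (by norm_num)
      ((Finset.mem_filter.mp hω).2)
  have hsumS : (S.card : ℝ) * ε ≤ ∑ ω : LPInst K N n m, ∏ j, f (ω j) := by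
    calc (S.card : ℝ) * ε = ∑ _ω ∈ S, ε := by rw [Finset.sum_const, nsmul_eq_mul]
      _ ≤ ∑ ω ∈ S, ∏ j, f (ω j) := Finset.sum_le_sum hw
      _ ≤ ∑ ω : LPInst K N n m, ∏ j, f (ω j) :=
          Finset.sum_le_sum_of_subset_of_nonneg (Finset.subset_univ _)
            (fun ω _ _ => Finset.prod_nonneg fun j _ => hfnonneg _)
  -- factorization of the sum
  have hsum1 : ∑ p : (Fin K → Fin n) × Fin N, f p = (n:ℝ)^K * ((N:ℝ) - 1/2) := by
    rw [Fintype.sum_prod_type]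
    have h1 : ∀ v : Fin K → Fin n, (∑ r : Fin N, f (v, r)) = (N:ℝ) - 1/2 := by
      intro v
      have h2 : ∀ r : Fin N, f (v, r) = 1 - (if r = rstar v then (1/2:ℝ) else 0) := by
        intro r; rw [hf]; dsimp only; split <;> norm_num
      rw [Finset.sum_congr rfl fun r _ => h2 r, Finset.sum_sub_distrib,
        Finset.sum_ite_eq' Finset.univ (rstar v) (fun _ => (1/2:ℝ))]
      simp
    rw [Finset.sum_congr rfl fun v _ => h1 v, Finset.sum_const]
    simp only [Finset.card_univ, Fintype.card_fun, Fintype.card_fin, nsmul_eq_mul]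
    push_cast
    ring
  have hfac : (∑ ω : LPInst K N n m, ∏ j, f (ω j)) = ((n:ℝ)^K * ((N:ℝ) - 1/2))^m := by
    calc (∑ ω : LPInst K N n m, ∏ j, f (ω j))
        = ∑ ω ∈ Fintype.piFinset
            (fun _ : Fin m => (Finset.univ : Finset ((Fin K → Fin n) × Fin N))),
            ∏ j, f (ω j) := by rw [Fintype.piFinset_univ]
      _ = ∏ _j : Fin m, ∑ p : (Fin K → Fin n) × Fin N, f p :=
          (Finset.prod_univ_sum _ _).symm
      _ = ((n:ℝ)^K * ((N:ℝ) - 1/2))^m := by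
          rw [Finset.prod_const, hsum1, Finset.card_univ, Fintype.card_fin]
  have hcard : (Fintype.card (LPInst K N n m) : ℝ) = ((n:ℝ)^K * (N:ℝ))^m := by
    simp only [Fintype.card_fun, Fintype.card_prod, Fintype.card_fin]
    push_cast
    ring
  set P : ℝ := (n:ℝ)^K with hP
  have hPpos : 0 < P := by positivity
  set D : ℝ := (P * N)^m with hD
  have hDpos : 0 < D := by positivity
  set R : ℝ := Real.exp (-(m:ℝ) / (8 * N)) with hR
  -- the key analytic estimate
  have hkey : (P * ((N:ℝ) - 1/2))^m ≤ ε * (D * R) := by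
    have hN1 : (1:ℝ) ≤ N := by exact_mod_cast hN
    have step1 : (N:ℝ) - 1/2 ≤ (N:ℝ) * Real.exp (-(1 / (2 * N))) := by
      have h := Real.add_one_le_exp (-(1 / (2 * (N:ℝ))))
      have h3 : (N:ℝ) * (-(1 / (2 * (N:ℝ))) + 1) ≤
          (N:ℝ) * Real.exp (-(1 / (2 * (N:ℝ)))) := mul_le_mul_of_nonneg_left h hN0.le
      have h4 : (N:ℝ) * (-(1 / (2 * (N:ℝ))) + 1) = (N:ℝ) - 1/2 := by
        field_simp
        ring
      linarith
    have step2 : (P * ((N:ℝ) - 1/2))^m ≤ (P * ((N:ℝ) * Real.exp (-(1 / (2 * N)))))^m := by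
      gcongr
      all_goals nlinarith [step1, hPpos, hN1]
    have step3 : (P * ((N:ℝ) * Real.exp (-(1 / (2 * N)))))^m
        = (P * N)^m * Real.exp (-(m:ℝ) / (2 * N)) := by
      rw [show P * ((N:ℝ) * Real.exp (-(1 / (2 * N)))) = (P * N) * Real.exp (-(1 / (2 * N)))
        by ring, mul_pow, ← Real.exp_nat_mul]
      congr 2
      field_simp
    have step4 : Real.exp (-(m:ℝ) / (2 * N)) ≤ ε * R := by
      rw [hε, Real.rpow_def_of_pos (by norm_num : (0:ℝ) < 1/2), hR, ← Real.exp_add]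
      apply Real.exp_le_exp.mpr
      have hlog : Real.log (1/2) = -Real.log 2 := by
        rw [one_div, Real.log_inv]
      rw [hlog]
      have hlog2 : Real.log 2 ≤ 3/4 := by linarith [Real.log_two_lt_d9]
      have h5 : Real.log 2 * θ ≤ 3/4 * θ := mul_le_mul_of_nonneg_right hlog2 hθ0
      rw [hθ]
      rw [hθ] at h5
      have h9 : -(m:ℝ)/(8*N) = -(m:ℝ)/(2*N) + (3/4) * ((m:ℝ)/(2*N)) := by ring
      linarith [h5, h9]
    calc (P * ((N:ℝ) - 1/2))^m ≤ (P * N)^m * Real.exp (-(m:ℝ) / (2 * N)) := by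
          rw [← step3]; exact step2
      _ ≤ (P * N)^m * (ε * R) := by
          apply mul_le_mul_of_nonneg_left step4 (by positivity)
      _ = ε * (D * R) := by rw [hD]; ring
  -- combine everything
  have hScard : (S.card : ℝ) ≤ D * R := by
    have h1 : (S.card : ℝ) * ε ≤ (D * R) * ε := by
      calc (S.card : ℝ) * ε ≤ ∑ ω : LPInst K N n m, ∏ j, f (ω j) := hsumS
        _ = (P * ((N:ℝ) - 1/2))^m := by rw [hfac, hP]
        _ ≤ ε * (D * R) := hkey
        _ = (D * R) * ε := by ring
    exact le_of_mul_le_mul_right h1 hεpos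
  rw [hcard, div_le_iff₀ hDpos]
  calc (S.card : ℝ) ≤ D * R := hScard
    _ = R * D := mul_comm _ _
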